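/- arXiv:2106.01275 — 2 statements merged into one kernel-verified Lean document; each statement's English description precedes it below -/
import Mathlib

section
/- Let d ≥ 2 and let p, k be natural numbers with 1 ≤ p < k and k + p odd, and set α = (k+p−1)/2 and β = (k−p−1)/2. Then the chromatic number of the displacement graph G(d,p,k) is at least the cardinality of the finite set C(d,α,β) ∪ T ∪ S. -/
open Finset

/-- The L1 norm on the integer lattice `Fin d → ℤ`. -/
def norm1 {d : ℕ} (x : Fin d → ℤ) : ℤ := ∑ i, |x i|

/-- The first standard basis vector of `Fin d → ℤ`. -/
def e1 {d : ℕ} : Fin d → ℤ := fun i => if (i : ℕ) = 0 then 1 else 0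

/-- `inN p k x y` means `y` belongs to the displaced distance-`k` neighborhood `N(x, p, k)`,
i.e. `‖y − (x + p·e₁)‖₁ ≤ k` or `‖y − (x − p·e₁)‖₁ ≤ k`. -/
def inN {d : ℕ} (p k : ℕ) (x y : Fin d → ℤ) : Prop :=
  norm1 (y - (x + (p : ℤ) • e1)) ≤ (k : ℤ) ∨ norm1 (y - (x - (p : ℤ) • e1)) ≤ (k : ℤ)


lemma norm1_neg {d : ℕ} (x : Fin d → ℤ) : norm1 (-x) = norm1 x :=
  Finset.sum_congr rfl fun i _ => by simp

lemma inN_symm {d : ℕ} {p k : ℕ} {x y : Fin d → ℤ} (h : inN p k x y) : inN p k y x := by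
  rcases h with h | h
  · right
    have hv : x - (y - (p : ℤ) • e1) = -(y - (x + (p : ℤ) • e1)) := by abel
    rw [hv, norm1_neg]; exact h
  · left
    have hv : x - (y + (p : ℤ) • e1) = -(y - (x - (p : ℤ) • e1)) := by abel
    rw [hv, norm1_neg]; exact h

/-- The displacement graph `G(d, p, k)` on the lattice `Fin d → ℤ`:
distinct `x, y` are adjacent iff `y ∈ N(x, p, k)`. -/
def dispGraph (d p k : ℕ) : SimpleGraph (Fin d → ℤ) where
  Adj x y := x ≠ y ∧ inN p k x y
  symm := ⟨fun _ _ h => ⟨h.1.symm, inN_symm h.2⟩⟩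
  loopless := ⟨fun _ h => h.1 rfl⟩


/-- `∑_{i=2}^d |x_i|` : the sum of absolute values of all but the first coordinate. -/
def tailSum {d : ℕ} (x : Fin d → ℤ) : ℤ :=
  ∑ i ∈ Finset.univ.filter (fun i : Fin d => (i : ℕ) ≠ 0), |x i|


/-- The `j`-th coordinate (0-indexed) of a lattice point, or `0` if out of range. -/
def coord {d : ℕ} (x : Fin d → ℤ) (j : ℕ) : ℤ := if h : j < d then x ⟨j, h⟩ else 0


/-- The set `C(d, α, β) = { x : ‖x‖₁ ≤ α and ∑_{i=2}^d |x_i| ≤ β }`. -/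
def Cset (d : ℕ) (α β : ℤ) : Set (Fin d → ℤ) := {x | norm1 x ≤ α ∧ tailSum x ≤ β}


/-- The set `T = { x : −(p−1) ≤ x₁ ≤ p, 1 ≤ x₂ ≤ β, and ∑_{i=2}^d |x_i| = β+1 }`. -/
def Tset (d : ℕ) (p β : ℤ) : Set (Fin d → ℤ) :=
  {x | -(p - 1) ≤ coord x 0 ∧ coord x 0 ≤ p ∧ 1 ≤ coord x 1 ∧ coord x 1 ≤ β ∧
       tailSum x = β + 1}


/-- The set `S = { x : p+1 ≤ x₁ ≤ α+1, |x₂| ≤ β, and ‖x‖₁ = α+1 }`. -/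
def Sset (d : ℕ) (p α β : ℤ) : Set (Fin d → ℤ) :=
  {x | p + 1 ≤ coord x 0 ∧ coord x 0 ≤ α + 1 ∧ |coord x 1| ≤ β ∧ norm1 x = α + 1}

def tail2 {d : ℕ} (x : Fin d → ℤ) : ℤ :=
  ∑ i ∈ Finset.univ.filter (fun i : Fin d => (i : ℕ) ≠ 0 ∧ (i : ℕ) ≠ 1), |x i|

lemma tailSum_nonneg {d : ℕ} (x : Fin d → ℤ) : 0 ≤ tailSum x :=
  Finset.sum_nonneg fun i _ => abs_nonneg _

lemma tail2_nonneg {d : ℕ} (x : Fin d → ℤ) : 0 ≤ tail2 x :=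
  Finset.sum_nonneg fun i _ => abs_nonneg _

lemma norm1_eq {d : ℕ} (hd : 0 < d) (x : Fin d → ℤ) :
    norm1 x = |x ⟨0, hd⟩| + tailSum x := by
  classical
  rw [norm1, tailSum,
    ← Finset.sum_filter_add_sum_filter_not Finset.univ (fun i : Fin d => (i : ℕ) ≠ 0) (fun i => |x i|)]
  rw [add_comm]
  congr 1
  have h : Finset.univ.filter (fun i : Fin d => ¬ (i : ℕ) ≠ 0) = {(⟨0, hd⟩ : Fin d)} := by
    ext i
    simp [Fin.ext_iff]
  rw [h, Finset.sum_singleton]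

lemma tailSum_eq {d : ℕ} (hd : 1 < d) (x : Fin d → ℤ) :
    tailSum x = |x ⟨1, hd⟩| + tail2 x := by
  classical
  rw [tailSum,
    ← Finset.sum_filter_add_sum_filter_not (Finset.univ.filter (fun i : Fin d => (i : ℕ) ≠ 0))
      (fun i : Fin d => (i : ℕ) ≠ 1) (fun i => |x i|)]
  rw [add_comm, Finset.filter_filter, Finset.filter_filter]
  congr 1
  have h : Finset.univ.filter (fun i : Fin d => (i : ℕ) ≠ 0 ∧ ¬ (i : ℕ) ≠ 1)
        = {(⟨1, hd⟩ : Fin d)} := by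
      ext i
      simp only [Finset.mem_filter, Finset.mem_univ, true_and, Finset.mem_singleton, Fin.ext_iff]
      omega
  rw [h, Finset.sum_singleton]

lemma tail2_sub {d : ℕ} (x y : Fin d → ℤ) : tail2 (y - x) ≤ tail2 y + tail2 x := by
  rw [tail2, tail2, tail2, ← Finset.sum_add_distrib]
  exact Finset.sum_le_sum fun i _ => by
    simpa [Pi.sub_apply] using abs_sub (y i) (x i)

lemma tailSum_sub_bound {d : ℕ} (hd : 1 < d) (x y : Fin d → ℤ) :
    tailSum (y - x) ≤ |y ⟨1, hd⟩ - x ⟨1, hd⟩| + (tailSum x - |x ⟨1, hd⟩|)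
      + (tailSum y - |y ⟨1, hd⟩|) := by
  have h1 := tailSum_eq hd (y - x)
  have h2 := tailSum_eq hd x
  have h3 := tailSum_eq hd y
  have h4 := tail2_sub x y
  have h5 : (y - x) ⟨1, hd⟩ = y ⟨1, hd⟩ - x ⟨1, hd⟩ := rfl
  rw [h5] at h1
  linarith

lemma norm1_shift {d : ℕ} (hd : 0 < d) (c : ℤ) (x y : Fin d → ℤ) :
    norm1 (y - (x + c • e1)) = |y ⟨0, hd⟩ - x ⟨0, hd⟩ - c| + tailSum (y - x) := by
  rw [norm1_eq hd]
  congr 1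
  · congr 1
    have h : e1 (⟨0, hd⟩ : Fin d) = 1 := if_pos rfl
    show y _ - (x _ + c * e1 (⟨0, hd⟩ : Fin d)) = _
    rw [h]
    ring
  · rw [tailSum, tailSum]
    refine Finset.sum_congr rfl fun i hi => ?_
    simp only [Finset.mem_filter] at hi
    congr 1
    show y i - (x i + c * e1 i) = y i - x i
    simp [e1, hi.2]

lemma abs_coord_le_norm1 {d : ℕ} (x : Fin d → ℤ) (i : Fin d) : |x i| ≤ norm1 x :=
  Finset.single_le_sum (fun j _ => abs_nonneg (x j)) (Finset.mem_univ i)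

lemma key_ineq (p k α β X0 X1 TX Y0 Y1 TY D : ℤ)
    (hp : 1 ≤ p) (hpk : p < k)
    (hα : 2*α = k + p - 1) (hβ : 2*β = k - p - 1)
    (hle : X0 ≤ Y0)
    (hx : (|X0| + TX ≤ α ∧ TX ≤ β) ∨
          (-(p-1) ≤ X0 ∧ X0 ≤ p ∧ 1 ≤ X1 ∧ X1 ≤ β ∧ TX = β + 1) ∨
          (p+1 ≤ X0 ∧ X0 ≤ α+1 ∧ |X1| ≤ β ∧ |X0| + TX = α+1))
    (hy : (|Y0| + TY ≤ α ∧ TY ≤ β) ∨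
          (-(p-1) ≤ Y0 ∧ Y0 ≤ p ∧ 1 ≤ Y1 ∧ Y1 ≤ β ∧ TY = β + 1) ∨
          (p+1 ≤ Y0 ∧ Y0 ≤ α+1 ∧ |Y1| ≤ β ∧ |Y0| + TY = α+1))
    (hX1 : |X1| ≤ TX) (hY1 : |Y1| ≤ TY)
    (hD : D ≤ |Y1 - X1| + (TX - |X1|) + (TY - |Y1|)) :
    |Y0 - X0 - p| + D ≤ k := by
  have c0 := abs_choice X0
  have c0' := abs_nonneg X0
  have c1 := abs_choice Y0
  have c1' := abs_nonneg Y0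
  have c2 := abs_choice X1
  have c2' := abs_nonneg X1
  have c3 := abs_choice Y1
  have c3' := abs_nonneg Y1
  have c4 := abs_choice (Y1 - X1)
  have c4' := abs_nonneg (Y1 - X1)
  have c5 := abs_choice (Y0 - X0 - p)
  have c5' := abs_nonneg (Y0 - X0 - p)
  omega


lemma mem_cases {d : ℕ} (h0 : 0 < d) (h1 : 1 < d) {p α β : ℤ} {x : Fin d → ℤ}
    (hx : x ∈ Cset d α β ∪ Tset d p β ∪ Sset d p α β) :
    (|x ⟨0, h0⟩| + tailSum x ≤ α ∧ tailSum x ≤ β) ∨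
    (-(p-1) ≤ x ⟨0, h0⟩ ∧ x ⟨0, h0⟩ ≤ p ∧ 1 ≤ x ⟨1, h1⟩ ∧ x ⟨1, h1⟩ ≤ β ∧
      tailSum x = β + 1) ∨
    (p+1 ≤ x ⟨0, h0⟩ ∧ x ⟨0, h0⟩ ≤ α+1 ∧ |x ⟨1, h1⟩| ≤ β ∧
      |x ⟨0, h0⟩| + tailSum x = α+1) := by
  have hc0 : coord x 0 = x ⟨0, h0⟩ := dif_pos h0
  have hc1 : coord x 1 = x ⟨1, h1⟩ := dif_pos h1
  rcases hx with (hx | hx) | hx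
  · obtain ⟨a, b⟩ := hx
    rw [norm1_eq h0] at a
    exact Or.inl ⟨a, b⟩
  · obtain ⟨a, b, c, e, f⟩ := hx
    rw [hc0] at a b
    rw [hc1] at c e
    exact Or.inr (Or.inl ⟨a, b, c, e, f⟩)
  · obtain ⟨a, b, c, e⟩ := hx
    rw [hc0] at a b
    rw [hc1] at c
    rw [norm1_eq h0] at e
    exact Or.inr (Or.inr ⟨a, b, c, e⟩)

lemma abs_tail_coord_le {d : ℕ} (h1 : 1 < d) (x : Fin d → ℤ) :
    |x ⟨1, h1⟩| ≤ tailSum x := by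
  have := tail2_nonneg x
  rw [tailSum_eq h1]
  linarith

lemma clique_union (d : ℕ) (hd : 2 ≤ d) (p k : ℕ) (hp : 1 ≤ p) (hpk : p < k)
    (α β : ℤ) (hα : 2 * α = (k : ℤ) + (p : ℤ) - 1) (hβ : 2 * β = (k : ℤ) - (p : ℤ) - 1) :
    (dispGraph d p k).IsClique (Cset d α β ∪ Tset d (p : ℤ) β ∪ Sset d (p : ℤ) α β) := by
  have h0 : 0 < d := by omega
  have h1 : 1 < d := hd
  have main : ∀ x y : Fin d → ℤ,
      x ∈ Cset d α β ∪ Tset d (p : ℤ) β ∪ Sset d (p : ℤ) α β →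
      y ∈ Cset d α β ∪ Tset d (p : ℤ) β ∪ Sset d (p : ℤ) α β →
      x ≠ y → x ⟨0, h0⟩ ≤ y ⟨0, h0⟩ → (dispGraph d p k).Adj x y := by
    intro x y hx hy hne hle
    refine ⟨hne, Or.inl ?_⟩
    rw [norm1_shift h0]
    exact key_ineq (p : ℤ) (k : ℤ) α β (x ⟨0, h0⟩) (x ⟨1, h1⟩) (tailSum x)
      (y ⟨0, h0⟩) (y ⟨1, h1⟩) (tailSum y) (tailSum (y - x))
      (by exact_mod_cast hp) (by exact_mod_cast hpk) hα hβ hle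
      (mem_cases h0 h1 hx) (mem_cases h0 h1 hy)
      (abs_tail_coord_le h1 x) (abs_tail_coord_le h1 y)
      (tailSum_sub_bound h1 x y)
  intro x hx y hy hne
  rcases le_total (x ⟨0, h0⟩) (y ⟨0, h0⟩) with hle | hle
  · exact main x y hx hy hne hle
  · exact (main y x hy hx hne.symm hle).symm

lemma union_finite (d : ℕ) (hd : 2 ≤ d) (p : ℤ) (hp : 1 ≤ p)
    (α β : ℤ) (hpβ : α = p + β) (hβ0 : 0 ≤ β) :
    (Cset d α β ∪ Tset d p β ∪ Sset d p α β).Finite := by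
  have h0 : 0 < d := by omega
  have h1 : 1 < d := hd
  apply Set.Finite.subset
    (Set.Finite.pi (fun _ : Fin d => Set.finite_Icc (-(α+1)) (α+1)))
  intro x hx
  have hm := mem_cases h0 h1 hx
  have hn : norm1 x ≤ α + 1 := by
    rw [norm1_eq h0]
    have c0 := abs_choice (x ⟨0, h0⟩)
    have c0' := abs_nonneg (x ⟨0, h0⟩)
    have c1' := abs_nonneg (x ⟨1, h1⟩)
    have ht := abs_tail_coord_le h1 x
    omega
  intro i _
  have := abs_coord_le_norm1 x i
  have h2 : |x i| ≤ α + 1 := le_trans this hn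
  exact Set.mem_Icc.2 (abs_le.1 h2)

/-- If `d ≥ 2`, `1 ≤ p < k`, `k + p` is odd, `α = (k+p−1)/2` and `β = (k−p−1)/2`, then the
chromatic number of the displacement graph `G(d, p, k)` is at least the cardinality of
`C(d, α, β) ∪ T ∪ S`. -/
theorem stmt11 (d : ℕ) (hd : 2 ≤ d) (p k : ℕ) (hp : 1 ≤ p) (hpk : p < k)
    (hodd : Odd (k + p))
    (α β : ℤ) (hα : 2 * α = (k : ℤ) + (p : ℤ) - 1) (hβ : 2 * β = (k : ℤ) - (p : ℤ) - 1) :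
    (((Cset d α β ∪ Tset d (p : ℤ) β ∪ Sset d (p : ℤ) α β).ncard : ℕ) : ℕ∞) ≤
      (dispGraph d p k).chromaticNumber := by
  classical
  have hpβ : α = (p : ℤ) + β := by omega
  have hβ0 : (0 : ℤ) ≤ β := by
    have : (p : ℤ) < k := by exact_mod_cast hpk
    omega
  have hfin := union_finite d hd (p : ℤ) (by exact_mod_cast hp) α β hpβ hβ0
  have hclique := clique_union d hd p k hp hpk α β hα hβ
  have h2 : (dispGraph d p k).IsClique (hfin.toFinset : Set (Fin d → ℤ)) := by
    rwa [Set.Finite.coe_toFinset]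
  have h3 := h2.card_le_chromaticNumber
  rwa [Set.ncard_eq_toFinset_card _ hfin]
end

section
/- Let d ≥ 2 and let p, k be natural numbers with 1 ≤ p < k and k + p odd, and set α = (k+p−1)/2 and β = (k−p−1)/2. If x ∈ T and y ∈ S, then |y₁ − p − x₁| + ∑_{i=2}^d |y_i − x_i| ≤ k; in particular x ∈ N(y,p,k). -/
open Finset

lemma norm1_split {d : ℕ} (hd : 0 < d) (x : Fin d → ℤ) :
    norm1 x = |coord x 0| + tailSum x := by
  have h : (Finset.univ.filter (fun i : Fin d => (i : ℕ) = 0)) = {(⟨0, hd⟩ : Fin d)} := by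
    ext i; simp [Fin.ext_iff]
  rw [norm1, ← Finset.sum_filter_add_sum_filter_not Finset.univ (fun i : Fin d => (i : ℕ) = 0)]
  rw [h, Finset.sum_singleton, tailSum, coord, dif_pos hd]

lemma tailSum_triangle {d : ℕ} (x y : Fin d → ℤ) :
    tailSum (x - y) ≤ tailSum x + tailSum y := by
  rw [tailSum, tailSum, tailSum, ← Finset.sum_add_distrib]
  exact Finset.sum_le_sum fun i _ => abs_sub (x i) (y i)

lemma tailSum_comm {d : ℕ} (x y : Fin d → ℤ) : tailSum (x - y) = tailSum (y - x) := by
  unfold tailSum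
  exact Finset.sum_congr rfl fun i _ => by simp [abs_sub_comm]

lemma tailSum_add_e1 {d : ℕ} (x : Fin d → ℤ) (c : ℤ) :
    tailSum (x + c • e1) = tailSum x := by
  unfold tailSum
  refine Finset.sum_congr rfl fun i hi => ?_
  simp only [Finset.mem_filter] at hi
  simp [e1, hi.2]

/-- If `d ≥ 2`, `1 ≤ p < k`, `k + p` is odd, `α = (k+p−1)/2` and `β = (k−p−1)/2`, then for
`x ∈ T` and `y ∈ S` we have `|y₁ − p − x₁| + ∑_{i=2}^d |y_i − x_i| ≤ k`; in particular
`x ∈ N(y, p, k)`. -/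
theorem stmt15 (d : ℕ) (hd : 2 ≤ d) (p k : ℕ) (hp : 1 ≤ p) (hpk : p < k)
    (hodd : Odd (k + p))
    (α β : ℤ) (hα : 2 * α = (k : ℤ) + (p : ℤ) - 1) (hβ : 2 * β = (k : ℤ) - (p : ℤ) - 1)
    (x y : Fin d → ℤ) (hx : x ∈ Tset d (p : ℤ) β) (hy : y ∈ Sset d (p : ℤ) α β) :
    |coord y 0 - (p : ℤ) - coord x 0| + tailSum (y - x) ≤ (k : ℤ) ∧ inN p k y x := by
  have hd0 : 0 < d := by omega
  obtain ⟨hx1, hx2, hx3, hx4, hx5⟩ := hx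
  obtain ⟨hy1, hy2, hy3, hy4⟩ := hy
  have hp0 : (0:ℤ) < (p:ℤ) := by exact_mod_cast hp
  -- tail sum of y
  have hyn : norm1 y = |coord y 0| + tailSum y := norm1_split hd0 y
  have habs : |coord y 0| = coord y 0 := abs_of_pos (by linarith)
  have hty : tailSum y = α + 1 - coord y 0 := by rw [hy4, habs] at hyn; linarith
  have htri : tailSum (y - x) ≤ tailSum y + tailSum x := tailSum_triangle y x
  have hmain : |coord y 0 - (p : ℤ) - coord x 0| + tailSum (y - x) ≤ (k : ℤ) := by
    rcases abs_cases (coord y 0 - (p : ℤ) - coord x 0) with ⟨h1, h2⟩ | ⟨h1, h2⟩ <;>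
      rw [h1] <;> linarith
  refine ⟨hmain, Or.inr ?_⟩
  have hz : x - (y - (p : ℤ) • e1) = (x - y) + (p:ℤ) • e1 := by ring
  rw [hz, norm1_split hd0, tailSum_add_e1, tailSum_comm]
  have hc : coord ((x - y) + (p:ℤ) • e1) 0 = -(coord y 0 - (p : ℤ) - coord x 0) := by
    simp [coord, dif_pos hd0, e1]
    ring
  rw [hc, abs_neg]
  exact hmain
end
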